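/- Let α > −1 and β > −1 be real numbers and n ≥ 2 an integer. Then Σ_{j=2}^{n} [(α+β+3)_{j−1} / (j−1)!] [(α+β+3)_{j−2} / (j−2)!] (2j+α+β) = (α+β+3) [(α+β+4)_{n−1} / (n−1)!] [(α+β+4)_{n−2} / (n−2)!]. -/
import Mathlib

/-- The Pochhammer symbol (rising factorial) `(a)_k = a (a+1) ⋯ (a+k-1)`. -/
noncomputable def poch (a : ℝ) (k : ℕ) : ℝ := (ascPochhammer ℝ k).eval a

lemma poch_zero (a : ℝ) : poch a 0 = 1 := by simp [poch]

lemma poch_succ (a : ℝ) (k : ℕ) : poch a (k + 1) = poch a k * (a + k) := by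
  simp [poch, ascPochhammer_succ_eval]

lemma poch_succ_left (a : ℝ) (k : ℕ) : poch a (k + 1) = a * poch (a + 1) k := by
  simp [poch, ascPochhammer_succ_left, Polynomial.eval_mul, Polynomial.eval_comp]

/-- `Σ_{j=2}^{n} [(α+β+3)_{j−1}/(j−1)!] [(α+β+3)_{j−2}/(j−2)!] (2j+α+β)
 = (α+β+3) [(α+β+4)_{n−1}/(n−1)!] [(α+β+4)_{n−2}/(n−2)!]`. -/
theorem c0_eigenvalue_sum (α β : ℝ) (hα : -1 < α) (hβ : -1 < β) (n : ℕ) (hn : 2 ≤ n) :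
    ∑ j ∈ Finset.Icc 2 n,
      poch (α + β + 3) (j - 1) / Nat.factorial (j - 1) *
        (poch (α + β + 3) (j - 2) / Nat.factorial (j - 2)) * (2 * j + α + β)
    = (α + β + 3) * (poch (α + β + 4) (n - 1) / Nat.factorial (n - 1)) *
        (poch (α + β + 4) (n - 2) / Nat.factorial (n - 2)) := by
  induction n, hn using Nat.le_induction with
  | base =>
      rw [show Finset.Icc 2 2 = {2} from Finset.Icc_self 2, Finset.sum_singleton]
      simp only [show (2:ℕ)-1=1 from rfl, show (2:ℕ)-2=0 from rfl, poch,
        ascPochhammer_one, ascPochhammer_zero, Polynomial.eval_X, Polynomial.eval_one,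
        Nat.factorial]
      push_cast
      ring
  | succ m hm ih =>
      rw [Finset.sum_Icc_succ_top (by omega : 2 ≤ m + 1), ih]
      obtain ⟨k, rfl⟩ : ∃ k, m = k + 2 := ⟨m - 2, by omega⟩
      have h1 : k + 2 + 1 - 1 = k + 2 := by omega
      have h2 : k + 2 + 1 - 2 = k + 1 := by omega
      have h3 : k + 2 - 1 = k + 1 := by omega
      have h4 : k + 2 - 2 = k := by omega
      rw [h1, h2, h3, h4]
      have e1 : poch (α + β + 3) (k + 2) = (α + β + 3) * poch (α + β + 4) (k + 1) := by
        rw [poch_succ_left]; ring_nf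
      have e2 : poch (α + β + 3) (k + 1) = (α + β + 3) * poch (α + β + 4) k := by
        rw [poch_succ_left]; ring_nf
      have e3 : poch (α + β + 4) (k + 2) = poch (α + β + 4) (k + 1) * (α + β + 4 + (k + 1)) := by
        rw [poch_succ]; push_cast; ring
      have e4 : poch (α + β + 4) (k + 1) = poch (α + β + 4) k * (α + β + 4 + k) := by
        rw [poch_succ]
      rw [e1, e2, e3]
      have f1 : (Nat.factorial (k + 2) : ℝ) = (k + 2) * (k + 1) * Nat.factorial k := by
        rw [Nat.factorial_succ, Nat.factorial_succ]; push_cast; ring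
      have f2 : (Nat.factorial (k + 1) : ℝ) = (k + 1) * Nat.factorial k := by
        rw [Nat.factorial_succ]; push_cast; ring
      rw [f1, f2]
      have hk : (Nat.factorial k : ℝ) ≠ 0 := by positivity
      have hk1 : (k : ℝ) + 1 ≠ 0 := by positivity
      have hk2 : (k : ℝ) + 2 ≠ 0 := by positivity
      rw [e4]
      field_simp
      push_cast
      ring
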